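/- Nondegeneracy on each trace stratum: for each k with 0 ≤ 2k ≤ n, the restriction of the η-pairing ⟨·,·⟩ to the subspace T^n_k of rank-n Minkowski tensors is nondegenerate: if t ∈ T^n_k satisfies ⟨t, s⟩ = 0 for all s ∈ T^n_k, then t = 0. -/
import Mathlib


noncomputable section

open scoped BigOperators

namespace MinkTensors

/-- A real rank-`n` tensor on Minkowski space. -/
abbrev MinkTensor (n : ℕ) : Type := (Fin n → Fin 4) → ℝ

/-- The Minkowski metric `η = diag(1,-1,-1,-1)` (which coincides with its inverse). -/
def η (μ ν : Fin 4) : ℝ := if μ = ν then (if μ = 0 then 1 else -1) else 0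

/-- `Λ` is a Lorentz transformation: `Λᵀ η Λ = η`. -/
def IsLorentz (Λ : Matrix (Fin 4) (Fin 4) ℝ) : Prop :=
  ∀ μ ν, ∑ ρ : Fin 4, ∑ σ : Fin 4, Λ ρ μ * η ρ σ * Λ σ ν = η μ ν

/-- `Λ` belongs to the proper orthochronous Lorentz group `SO⁺(1,3)`. -/
def IsProperOrtho (Λ : Matrix (Fin 4) (Fin 4) ℝ) : Prop :=
  IsLorentz Λ ∧ Λ.det = 1 ∧ 1 ≤ Λ 0 0

/-- The parity transformation `diag(1,-1,-1,-1)`. -/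
def parityMat : Matrix (Fin 4) (Fin 4) ℝ := Matrix.of fun μ ν => η μ ν

/-- The action `t ↦ Λ^{ν₁}{}_{μ₁}···Λ^{ν_n}{}_{μ_n} t_{ν₁...ν_n}` of a matrix on rank-`n`
tensors. -/
def actT {n : ℕ} (Λ : Matrix (Fin 4) (Fin 4) ℝ) (t : MinkTensor n) : MinkTensor n :=
  fun idx => ∑ νs : Fin n → Fin 4, (∏ i, Λ (νs i) (idx i)) * t νs

/-- The tensor is Lorentz covariant (invariant under `SO⁺(1,3)`) and parity invariant. -/
def IsInvariant {n : ℕ} (t : MinkTensor n) : Prop :=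
  (∀ Λ, IsProperOrtho Λ → actT Λ t = t) ∧ actT parityMat t = t

/-- The tensor is traceless: every `η`-contraction of two of its indices vanishes. -/
def Traceless {n : ℕ} (t : MinkTensor n) : Prop :=
  ∀ i j : Fin n, i ≠ j → ∀ idx : Fin n → Fin 4,
    ∑ c : Fin 4, η c c * t (Function.update (Function.update idx i c) j c) = 0

/-- A splitting of the `n` index positions into `k` (ordered) pairs and `n - 2k` remaining
positions; this encodes a partition `{I₀, I₁, ..., I_k}` with `|I₁| = ⋯ = |I_k| = 2`. -/
abbrev PairSplit (n k : ℕ) : Type := (Fin k ⊕ (Fin k ⊕ Fin (n - 2 * k))) ≃ Fin n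

/-- `η_{I₁}···η_{I_k} s_{I₀}` : place `η`-factors at the pairs of the splitting and the
tensor `s` at the remaining positions. -/
def place {n : ℕ} (k : ℕ) (e : PairSplit n k) (s : MinkTensor (n - 2 * k)) :
    MinkTensor n :=
  fun idx =>
    (∏ i : Fin k, η (idx (e (Sum.inl i))) (idx (e (Sum.inr (Sum.inl i))))) *
      s fun j => idx (e (Sum.inr (Sum.inr j)))

/-- The iterated `η`-trace of `t` over the pairs of positions of the splitting. -/
def ctr {n : ℕ} (k : ℕ) (e : PairSplit n k) (t : MinkTensor n) :
    MinkTensor (n - 2 * k) :=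
  fun idx => ∑ c : Fin k → Fin 4,
    (∏ i, η (c i) (c i)) *
      t fun pos =>
        match e.symm pos with
        | Sum.inl i => c i
        | Sum.inr (Sum.inl i) => c i
        | Sum.inr (Sum.inr j) => idx j

/-- The `η`-pairing `⟨t, s⟩ = η^{μ₁ν₁}···η^{μ_nν_n} t_{μ₁...μ_n} s_{ν₁...ν_n}`. -/
def pairing {n : ℕ} (t s : MinkTensor n) : ℝ :=
  ∑ μs : Fin n → Fin 4, ∑ νs : Fin n → Fin 4,
    (∏ i, η (μs i) (νs i)) * t μs * s νs

/-- The trace stratum `T^n_k`: the span of the tensors `η_{I₁}···η_{I_k} s_{I₀}` with `s`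
traceless. -/
def stratum (n k : ℕ) : Submodule ℝ (MinkTensor n) :=
  Submodule.span ℝ
    {t | ∃ (e : PairSplit n k) (s : MinkTensor (n - 2 * k)), Traceless s ∧ t = place k e s}

end MinkTensors

open MinkTensors

namespace MinkTensors

lemma η_diag_mul_self (a : Fin 4) : η a a * η a a = 1 := by
  unfold η; simp; split_ifs <;> norm_num

lemma η_triple (a b : Fin 4) : η a a * η b b * η a b = η a b := by
  by_cases h : a = b
  · subst h; rw [η_diag_mul_self, one_mul]
  · simp [η, h]

/-- Euclideanizing involution. -/
def eps {n : ℕ} (t : MinkTensor n) : MinkTensor n :=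
  fun μs => (∏ i, η (μs i) (μs i)) * t μs

lemma pairing_eps {n : ℕ} (t : MinkTensor n) :
    pairing t (eps t) = ∑ μs : Fin n → Fin 4, t μs ^ 2 := by
  unfold pairing eps
  refine Finset.sum_congr rfl fun μs _ => ?_
  rw [Finset.sum_eq_single μs]
  · have h1 : (∏ i, η (μs i) (μs i)) * (∏ i, η (μs i) (μs i)) = 1 := by
      rw [← Finset.prod_mul_distrib]
      exact Finset.prod_eq_one fun i _ => η_diag_mul_self _
    calc (∏ i, η (μs i) (μs i)) * t μs * ((∏ i, η (μs i) (μs i)) * t μs)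
        = ((∏ i, η (μs i) (μs i)) * (∏ i, η (μs i) (μs i))) * (t μs * t μs) := by ring
      _ = t μs ^ 2 := by rw [h1]; ring
  · intro νs _ hne
    obtain ⟨i, hi⟩ := Function.ne_iff.mp (Ne.symm hne)
    have : (∏ j, η (μs j) (νs j)) = 0 :=
      Finset.prod_eq_zero (Finset.mem_univ i) (by simp [η, hi])
    rw [this]; ring
  · intro hmem; exact absurd (Finset.mem_univ _) hmem

lemma eps_traceless {n : ℕ} {s : MinkTensor n} (hs : Traceless s) : Traceless (eps s) := by
  intro i j hij idx
  unfold eps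
  have key : ∀ c : Fin 4,
      (∏ p, η (Function.update (Function.update idx i c) j c p)
        (Function.update (Function.update idx i c) j c p))
      = ∏ p ∈ (Finset.univ.erase j).erase i, η (idx p) (idx p) := by
    intro c
    set f := Function.update (Function.update idx i c) j c with hf
    rw [← Finset.prod_erase_mul Finset.univ _ (Finset.mem_univ j),
        ← Finset.prod_erase_mul _ _ (Finset.mem_erase.mpr ⟨hij, Finset.mem_univ i⟩)]
    have fi : f i = c := by
      rw [hf, Function.update_of_ne hij, Function.update_self]
    have fj : f j = c := Function.update_self _ _ _
    rw [fi, fj, mul_assoc, η_diag_mul_self, mul_one]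
    refine Finset.prod_congr rfl fun p hp => ?_
    have hpi : p ≠ i := (Finset.mem_erase.mp hp).1
    have hpj : p ≠ j := (Finset.mem_erase.mp (Finset.mem_erase.mp hp).2).1
    rw [hf, Function.update_of_ne hpj, Function.update_of_ne hpi]
  calc ∑ c : Fin 4, η c c *
        ((∏ p, η (Function.update (Function.update idx i c) j c p)
          (Function.update (Function.update idx i c) j c p)) *
          s (Function.update (Function.update idx i c) j c))
      = (∏ p ∈ (Finset.univ.erase j).erase i, η (idx p) (idx p)) *
        ∑ c : Fin 4, η c c * s (Function.update (Function.update idx i c) j c) := by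
        rw [Finset.mul_sum]
        refine Finset.sum_congr rfl fun c _ => ?_
        rw [key c]; ring
    _ = 0 := by rw [hs i j hij idx, mul_zero]

lemma eps_place {n k : ℕ} (e : PairSplit n k) (s : MinkTensor (n - 2 * k)) :
    eps (place k e s) = place k e (eps s) := by
  funext idx
  unfold eps place
  have hsplit : (∏ p, η (idx p) (idx p))
      = (∏ i : Fin k, η (idx (e (Sum.inl i))) (idx (e (Sum.inl i)))) *
        ((∏ i : Fin k, η (idx (e (Sum.inr (Sum.inl i)))) (idx (e (Sum.inr (Sum.inl i))))) *
         (∏ j, η (idx (e (Sum.inr (Sum.inr j)))) (idx (e (Sum.inr (Sum.inr j)))))) := by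
    rw [← Equiv.prod_comp e (fun p => η (idx p) (idx p)), Fintype.prod_sum_type,
      Fintype.prod_sum_type]
  rw [hsplit]
  have h2 : (∏ i : Fin k, η (idx (e (Sum.inl i))) (idx (e (Sum.inl i)))) *
      (∏ i : Fin k, η (idx (e (Sum.inr (Sum.inl i)))) (idx (e (Sum.inr (Sum.inl i))))) *
      (∏ i : Fin k, η (idx (e (Sum.inl i))) (idx (e (Sum.inr (Sum.inl i)))))
      = ∏ i : Fin k, η (idx (e (Sum.inl i))) (idx (e (Sum.inr (Sum.inl i)))) := by
    rw [← Finset.prod_mul_distrib, ← Finset.prod_mul_distrib]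
    exact Finset.prod_congr rfl fun i _ => η_triple _ _
  set PA := ∏ i : Fin k, η (idx (e (Sum.inl i))) (idx (e (Sum.inl i)))
  set PB := ∏ i : Fin k, η (idx (e (Sum.inr (Sum.inl i)))) (idx (e (Sum.inr (Sum.inl i))))
  set PR := ∏ j, η (idx (e (Sum.inr (Sum.inr j)))) (idx (e (Sum.inr (Sum.inr j))))
  set PAB := ∏ i : Fin k, η (idx (e (Sum.inl i))) (idx (e (Sum.inr (Sum.inl i))))
  set sR := s fun j => idx (e (Sum.inr (Sum.inr j)))
  calc PA * (PB * PR) * (PAB * sR) = (PA * PB * PAB) * (PR * sR) := by ring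
    _ = PAB * (PR * sR) := by rw [h2]

lemma eps_mem {n k : ℕ} {t : MinkTensor n} (ht : t ∈ stratum n k) :
    eps t ∈ stratum n k := by
  induction ht using Submodule.span_induction with
  | mem x hx =>
    obtain ⟨e, s, hs, rfl⟩ := hx
    rw [eps_place]
    exact Submodule.subset_span ⟨e, eps s, eps_traceless hs, rfl⟩
  | zero =>
    have : eps (0 : MinkTensor n) = 0 := by funext μs; simp [eps]
    rw [this]; exact zero_mem _
  | add x y _ _ hx hy =>
    have : eps (x + y) = eps x + eps y := by
      funext μs; simp [eps]; ring
    rw [this]; exact add_mem hx hy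
  | smul a x _ hx =>
    have : eps (a • x) = a • eps x := by
      funext μs; simp [eps]; ring
    rw [this]; exact Submodule.smul_mem _ _ hx

end MinkTensors

open MinkTensors in
theorem strata_pairing_nondegenerate {n k : ℕ} (hk : 2 * k ≤ n)
    (t : MinkTensor n) (ht : t ∈ stratum n k)
    (h : ∀ s ∈ stratum n k, pairing t s = 0) :
    t = 0 := by
  have h0 := h (eps t) (eps_mem ht)
  rw [pairing_eps] at h0
  funext μs
  have hz := (Finset.sum_eq_zero_iff_of_nonneg (fun i _ => sq_nonneg (t i))).mp h0 μs
    (Finset.mem_univ μs)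
  have : t μs = 0 := by
    have := sq_eq_zero_iff.mp hz
    exact this
  simpa using this
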